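/- For every real τ > 0, every real h with 0 < h < 2, and every dimension d ≥ 1, one has Σ_{ν ∈ ℤ^d \ {0}} |ν|^τ e^{-h|ν|} ≤ 2^{3d} (2τ/e)^τ h^{-τ-d}, where |ν| = Σ_{i=1}^d |ν_i|. -/

import Mathlib

/-- `|ν| = Σ_i |ν_i|`, the ℓ¹ norm of an integer vector. -/
noncomputable def l1 {d : ℕ} (ν : Fin d → ℤ) : ℝ := ∑ i, |(ν i : ℝ)|

lemma l1_nonneg {d : ℕ} (ν : Fin d → ℤ) : 0 ≤ l1 ν :=
  Finset.sum_nonneg fun _ _ => abs_nonneg _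

lemma exp_one_mul_le_exp (y : ℝ) : Real.exp 1 * y ≤ Real.exp y := by
  have h := Real.add_one_le_exp (y - 1)
  have := mul_le_mul_of_nonneg_left h (Real.exp_pos 1).le
  calc Real.exp 1 * y = Real.exp 1 * (y - 1 + 1) := by ring
    _ ≤ Real.exp 1 * Real.exp (y - 1) := this
    _ = Real.exp y := by rw [← Real.exp_add]; ring_nf

lemma key (τ a x : ℝ) (hτ : 0 < τ) (ha : 0 < a) (hx : 0 ≤ x) :
    x ^ τ ≤ (τ / (Real.exp 1 * a)) ^ τ * Real.exp (a * x) := by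
  have hy : (0:ℝ) ≤ Real.exp 1 * (a * x / τ) := by positivity
  have h1 : Real.exp 1 * (a * x / τ) ≤ Real.exp (a * x / τ) := exp_one_mul_le_exp _
  have h2 : (Real.exp 1 * (a * x / τ)) ^ τ ≤ Real.exp (a * x / τ) ^ τ :=
    Real.rpow_le_rpow hy h1 hτ.le
  have h3 : Real.exp (a * x / τ) ^ τ = Real.exp (a * x) := by
    rw [← Real.exp_mul]
    congr 1
    field_simp
  have hxeq : x = τ / (Real.exp 1 * a) * (Real.exp 1 * (a * x / τ)) := by
    field_simp
  calc x ^ τ = (τ / (Real.exp 1 * a) * (Real.exp 1 * (a * x / τ))) ^ τ := by rw [← hxeq]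
    _ = (τ / (Real.exp 1 * a)) ^ τ * (Real.exp 1 * (a * x / τ)) ^ τ :=
        Real.mul_rpow (by positivity) hy
    _ ≤ (τ / (Real.exp 1 * a)) ^ τ * Real.exp (a * x) := by
        rw [← h3]; exact mul_le_mul_of_nonneg_left h2 (by positivity)

lemma one_dim (a : ℝ) (ha : 0 < a) :
    HasSum (fun n : ℤ => Real.exp (-a * |(n : ℝ)|))
      ((1 - Real.exp (-a))⁻¹ + (1 - Real.exp (-a))⁻¹ - 1) := by
  set r := Real.exp (-a) with hr
  have hr0 : 0 < r := Real.exp_pos _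
  have hr1 : r < 1 := Real.exp_lt_one_iff.mpr (by linarith) -- ?
  have hgeo : HasSum (fun n : ℕ => r ^ n) (1 - r)⁻¹ := hasSum_geometric_of_lt_one hr0.le hr1
  have hnat : (fun n : ℕ => Real.exp (-a * |((n : ℤ) : ℝ)|)) = fun n : ℕ => r ^ n := by
    funext n
    rw [hr, ← Real.exp_nat_mul]
    congr 1
    rw [abs_of_nonneg (by positivity)]
    push_cast
    ring
  have hneg : (fun n : ℕ => Real.exp (-a * |((-(n : ℤ)) : ℝ)|)) = fun n : ℕ => r ^ n := by
    funext n
    rw [hr, ← Real.exp_nat_mul]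
    congr 1
    push_cast
    rw [abs_neg, abs_of_nonneg (by positivity)]
    ring
  have h0 : Real.exp (-a * |((0 : ℤ) : ℝ)|) = 1 := by norm_num
  have h2 : HasSum (fun n : ℕ => Real.exp (-a * |(((-(n:ℤ)) : ℤ) : ℝ)|)) (1 - r)⁻¹ := by
    convert hgeo using 2 with n
    rw [hr, ← Real.exp_nat_mul]
    congr 1
    push_cast
    rw [abs_neg, abs_of_nonneg (by positivity)]
    ring
  have := HasSum.of_nat_of_neg (f := fun n : ℤ => Real.exp (-a * |(n : ℝ)|))
    (hnat ▸ hgeo) h2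
  simpa [h0] using this

set_option maxHeartbeats 1000000 in
lemma multi (a S : ℝ)
    (hS : HasSum (fun n : ℤ => Real.exp (-a * |(n : ℝ)|)) S) :
    ∀ d : ℕ, HasSum (fun ν : Fin d → ℤ => Real.exp (-a * l1 ν)) (S ^ d) := by
  intro d
  induction d with
  | zero =>
      have : (fun ν : Fin 0 → ℤ => Real.exp (-a * l1 ν)) = fun _ => 1 := by
        funext ν; simp [l1]
      rw [this, pow_zero]
      simpa using hasSum_fintype (fun _ : Fin 0 → ℤ => (1 : ℝ))
  | succ d ih =>
      refine (Equiv.hasSum_iff (Fin.consEquiv (fun _ : Fin (d + 1) => ℤ))).mp ?_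
      have hnn : ∀ n : ℤ, 0 ≤ Real.exp (-a * |(n : ℝ)|) := fun n => (Real.exp_pos _).le
      have hprod : Summable fun z : ℤ × (Fin d → ℤ) =>
          Real.exp (-a * |(z.1 : ℝ)|) * Real.exp (-a * l1 z.2) :=
        hS.summable.mul_of_nonneg ih.summable (fun n => (Real.exp_pos _).le)
          (fun ν => (Real.exp_pos _).le)
      have hmul : HasSum (fun z : ℤ × (Fin d → ℤ) =>
          Real.exp (-a * |(z.1 : ℝ)|) * Real.exp (-a * l1 z.2)) (S * S ^ d) :=
        hS.mul ih hprod
      have : (fun ν : Fin (d + 1) → ℤ => Real.exp (-a * l1 ν)) ∘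
          (Fin.consEquiv (fun _ : Fin (d + 1) => ℤ)) =
          fun z : ℤ × (Fin d → ℤ) => Real.exp (-a * |(z.1 : ℝ)|) * Real.exp (-a * l1 z.2) := by
        funext z
        have happ : (Fin.consEquiv fun _ : Fin (d + 1) => ℤ) z = Fin.cons z.1 z.2 := rfl
        simp only [Function.comp_apply, happ]
        rw [← Real.exp_add]
        congr 1
        have : l1 (Fin.cons z.1 z.2) = |(z.1 : ℝ)| + l1 z.2 := by
          simp [l1, Fin.sum_univ_succ]
        rw [this]; ring
      rw [this, pow_succ]
      convert hmul using 1
      ring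

/-- for `τ > 0`, `0 < h < 2` and `d ≥ 1`,
`Σ_{ν ∈ ℤ^d \ {0}} |ν|^τ e^{-h|ν|} ≤ 2^{3d} (2τ/e)^τ h^{-τ-d}`. -/
theorem sum_pow_mul_exp_le (d : ℕ) (hd : 1 ≤ d) (τ : ℝ) (hτ : 0 < τ)
    (h : ℝ) (h0 : 0 < h) (h2 : h < 2) :
    Summable (fun ν : {ν : Fin d → ℤ // ν ≠ 0} => l1 ν.1 ^ τ * Real.exp (-h * l1 ν.1)) ∧
    ∑' ν : {ν : Fin d → ℤ // ν ≠ 0}, l1 ν.1 ^ τ * Real.exp (-h * l1 ν.1) ≤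
      2 ^ (3 * d) * (2 * τ / Real.exp 1) ^ τ * h ^ (-τ - d) := by
  set a : ℝ := h / 2 with ha_def
  have ha : 0 < a := by positivity
  have ha1 : a < 1 := by rw [ha_def]; linarith
  set r := Real.exp (-a) with hrdef
  set S : ℝ := (1 - r)⁻¹ + (1 - r)⁻¹ - 1 with hSdef
  have hS := one_dim a ha
  have hr0 : 0 < r := Real.exp_pos _
  have hr1 : r < 1 := Real.exp_lt_one_iff.mpr (by linarith)
  have h1r : 0 < 1 - r := by linarith
  have hinv1 : 1 ≤ (1 - r)⁻¹ := by
    rw [le_inv_comm₀ one_pos h1r]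
    linarith
  have hS0 : 0 ≤ S := by rw [hSdef]; linarith
  have hra : r ≤ (1 + a)⁻¹ := by
    have hea : 1 + a ≤ Real.exp a := by
      have := Real.add_one_le_exp a; linarith
    rw [hrdef, Real.exp_neg]
    exact inv_anti₀ (by linarith) hea
  have h1ra : a / 2 ≤ 1 - r := by
    have : 1 - (1 + a)⁻¹ = a / (1 + a) := by field_simp; ring
    have h2a : a / (1 + a) ≥ a / 2 := by
      apply div_le_div_of_nonneg_left ha.le (by linarith) (by linarith)
    linarith [hra, this ▸ h2a]
  have hS8 : S ≤ 8 / h := by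
    have : (1 - r)⁻¹ ≤ (a / 2)⁻¹ := inv_anti₀ (by positivity) h1ra
    have h4 : (a / 2)⁻¹ = 4 / h := by rw [ha_def]; field_simp; norm_num
    rw [hSdef]
    have h48 : 8 / h = 2 * (4 / h) := by ring
    have : (1 - r)⁻¹ ≤ 4 / h := by linarith [h4 ▸ this]
    linarith
  have hG := multi a S hS d
  set K := (τ / (Real.exp 1 * a)) ^ τ with hKdef
  have hK0 : 0 ≤ K := Real.rpow_nonneg (by positivity) _
  have hbound : ∀ ν : Fin d → ℤ, l1 ν ^ τ * Real.exp (-h * l1 ν) ≤ K * Real.exp (-a * l1 ν) := by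
    intro ν
    have hx := l1_nonneg ν
    have hkey := key τ a (l1 ν) hτ ha hx
    have hmul := mul_le_mul_of_nonneg_right hkey (Real.exp_pos (-h * l1 ν)).le
    calc l1 ν ^ τ * Real.exp (-h * l1 ν)
        ≤ K * Real.exp (a * l1 ν) * Real.exp (-h * l1 ν) := hmul
      _ = K * Real.exp (-a * l1 ν) := by
          rw [mul_assoc, ← Real.exp_add]
          congr 2
          rw [ha_def]; ring
  have hsub : Summable (fun ν : {ν : Fin d → ℤ // ν ≠ 0} => Real.exp (-a * l1 ν.1)) :=
    hG.summable.subtype _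
  have hfs : Summable (fun ν : {ν : Fin d → ℤ // ν ≠ 0} => l1 ν.1 ^ τ * Real.exp (-h * l1 ν.1)) :=
    Summable.of_nonneg_of_le (fun ν => mul_nonneg (Real.rpow_nonneg (l1_nonneg _) _) (Real.exp_pos _).le) (fun ν => hbound ν.1) (hsub.mul_left K)
  refine ⟨hfs, ?_⟩
  have hsub_le : ∑' ν : {ν : Fin d → ℤ // ν ≠ 0}, Real.exp (-a * l1 ν.1) ≤ S ^ d := by
    have := Summable.tsum_subtype_le (fun ν : Fin d → ℤ => Real.exp (-a * l1 ν)) {ν | ν ≠ 0}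
      (fun ν => (Real.exp_pos _).le) hG.summable
    rw [hG.tsum_eq] at this
    exact this
  have step1 : ∑' ν : {ν : Fin d → ℤ // ν ≠ 0}, l1 ν.1 ^ τ * Real.exp (-h * l1 ν.1) ≤ K * S ^ d := by
    calc ∑' ν : {ν : Fin d → ℤ // ν ≠ 0}, l1 ν.1 ^ τ * Real.exp (-h * l1 ν.1)
        ≤ ∑' ν : {ν : Fin d → ℤ // ν ≠ 0}, K * Real.exp (-a * l1 ν.1) :=
          Summable.tsum_le_tsum (fun ν => hbound ν.1) hfs (hsub.mul_left K)
      _ = K * ∑' ν : {ν : Fin d → ℤ // ν ≠ 0}, Real.exp (-a * l1 ν.1) := tsum_mul_left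
      _ ≤ K * S ^ d := mul_le_mul_of_nonneg_left hsub_le hK0
  have hKeq : K = (2 * τ / Real.exp 1) ^ τ * (h ^ τ)⁻¹ := by
    rw [hKdef, show τ / (Real.exp 1 * a) = (2 * τ / Real.exp 1) / h by
      rw [ha_def]; field_simp]
    rw [Real.div_rpow (by positivity) h0.le, div_eq_mul_inv]
  have hfinal : K * (8 / h) ^ d = 2 ^ (3 * d) * (2 * τ / Real.exp 1) ^ τ * h ^ (-τ - (d:ℝ)) := by
    have hsplit : h ^ (-τ - (d:ℝ)) = (h ^ τ)⁻¹ * ((h:ℝ) ^ d)⁻¹ := by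
      rw [show -τ - (d:ℝ) = (-τ) + (-(d:ℝ)) by ring, Real.rpow_add h0,
        Real.rpow_neg h0.le, Real.rpow_neg h0.le, Real.rpow_natCast]
    rw [hKeq, hsplit, div_pow, show (8:ℝ) ^ d = 2 ^ (3 * d) by rw [pow_mul]; norm_num]
    field_simp
  calc ∑' ν : {ν : Fin d → ℤ // ν ≠ 0}, l1 ν.1 ^ τ * Real.exp (-h * l1 ν.1)
      ≤ K * S ^ d := step1
    _ ≤ K * (8 / h) ^ d := by
        exact mul_le_mul_of_nonneg_left (pow_le_pow_left₀ hS0 hS8 d) hK0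
    _ = 2 ^ (3 * d) * (2 * τ / Real.exp 1) ^ τ * h ^ (-τ - (d:ℝ)) := hfinal
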